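/- For positive reals a = tan A and b = tan B with A, B ∈ (0, π/2) and A + B < π/2, the inequality √((1+a²)·b) + √((1+b²)·a) < √(3·(a+b)) can hold; specifically, there exist angles A, B with A + B < π/2 for which the strict inequality holds (e.g., A and B both sufficiently small), and for all A, B with A + B ≥ π/2 within (0, π/2) the reverse strict inequality √((1+a²)·b) + √((1+b²)·a) > √(3·(a+b)) holds. -/

import Mathlib

open MeasureTheory Real EuclideanGeometry
open scoped RealInnerProductSpace

def tri (A B C : EuclideanSpace ℝ (Fin 2)) : Set (EuclideanSpace ℝ (Fin 2)) :=
  convexHull ℝ {A, B, C}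

/-- The region of the Steinhaus partition of triangle `ABC` (determined by the
perpendiculars through `X` to the side lines) that contains the vertex `A`. -/
def steinRegion (A B C X : EuclideanSpace ℝ (Fin 2)) : Set (EuclideanSpace ℝ (Fin 2)) :=
  tri A B C ∩ {Y | (inner ℝ (Y - X) (B - A) : ℝ) ≤ 0 ∧ (inner ℝ (Y - X) (C - A) : ℝ) ≤ 0}

/-- `sP A B C X` is the area of the Steinhaus region at vertex `A`;
the areas at `B` and `C` are `sP B A C X` and `sP C A B X`. -/
noncomputable def sP (A B C X : EuclideanSpace ℝ (Fin 2)) : ℝ :=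
  (volume (steinRegion A B C X)).toReal

noncomputable def triArea (A B C : EuclideanSpace ℝ (Fin 2)) : ℝ :=
  (volume (tri A B C)).toReal

def Acute (A B C : EuclideanSpace ℝ (Fin 2)) : Prop :=
  ∠ B A C < π/2 ∧ ∠ A B C < π/2 ∧ ∠ B C A < π/2

lemma key_ineq {a b : ℝ} (ha : 0 < a) (hb : 0 < b) (hab : 1 ≤ a * b) :
    Real.sqrt (3 * (a + b)) <
      Real.sqrt ((1 + a ^ 2) * b) + Real.sqrt ((1 + b ^ 2) * a) := by
  have hs : (0:ℝ) ≤ (1 + a ^ 2) * b := by positivity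
  have ht : (0:ℝ) ≤ (1 + b ^ 2) * a := by positivity
  have hspos : 0 < Real.sqrt ((1 + a ^ 2) * b) := Real.sqrt_pos.2 (by positivity)
  have htpos : 0 < Real.sqrt ((1 + b ^ 2) * a) := Real.sqrt_pos.2 (by positivity)
  rw [Real.sqrt_lt' (by positivity)]
  have hs2 : Real.sqrt ((1 + a ^ 2) * b) ^ 2 = (1 + a ^ 2) * b := Real.sq_sqrt hs
  have ht2 : Real.sqrt ((1 + b ^ 2) * a) ^ 2 = (1 + b ^ 2) * a := Real.sq_sqrt ht
  have hst : Real.sqrt ((1 + a ^ 2) * b) * Real.sqrt ((1 + b ^ 2) * a)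
      = Real.sqrt (((1 + a ^ 2) * b) * ((1 + b ^ 2) * a)) := (Real.sqrt_mul hs _).symm
  have hkey : a + b ≤ Real.sqrt ((1 + a ^ 2) * b) * Real.sqrt ((1 + b ^ 2) * a) := by
    rw [hst, Real.le_sqrt (by positivity) (by positivity)]
    nlinarith [sq_nonneg (a - b), sq_nonneg (a * b - 1), sq_nonneg (a + b),
      mul_pos ha hb, sq_nonneg (a*b*(a+b) - (a+b))]
  nlinarith [hs2, ht2, hkey, mul_pos ha hb]

theorem tan_inequality_dichotomy :
    (∃ A B : ℝ, 0 < A ∧ 0 < B ∧ A + B < π/2 ∧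
      Real.sqrt ((1 + Real.tan A ^ 2) * Real.tan B) +
        Real.sqrt ((1 + Real.tan B ^ 2) * Real.tan A) <
        Real.sqrt (3 * (Real.tan A + Real.tan B))) ∧
    (∀ A B : ℝ, 0 < A → A < π/2 → 0 < B → B < π/2 → π/2 ≤ A + B →
      Real.sqrt (3 * (Real.tan A + Real.tan B)) <
        Real.sqrt ((1 + Real.tan A ^ 2) * Real.tan B) +
          Real.sqrt ((1 + Real.tan B ^ 2) * Real.tan A)) := by
  constructor
  · refine ⟨Real.arctan 2⁻¹, Real.arctan 2⁻¹, ?_, ?_, ?_, ?_⟩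
    · rw [← Real.arctan_zero]; exact Real.arctan_strictMono (by norm_num)
    · rw [← Real.arctan_zero]; exact Real.arctan_strictMono (by norm_num)
    · have h : Real.arctan 2⁻¹ < π / 4 := by
        rw [← Real.arctan_one]; exact Real.arctan_strictMono (by norm_num)
      linarith
    · rw [Real.tan_arctan]
      have h1 : ((1:ℝ) + (2:ℝ)⁻¹ ^ 2) * (2:ℝ)⁻¹ = 5/8 := by norm_num
      rw [h1]
      have h2 : (3:ℝ) * ((2:ℝ)⁻¹ + (2:ℝ)⁻¹) = 3 := by norm_num
      rw [h2]
      rw [Real.lt_sqrt (by positivity)]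
      have := Real.sq_sqrt (show (0:ℝ) ≤ 5/8 by norm_num)
      nlinarith [Real.sqrt_nonneg (5/8 : ℝ)]
  · intro A B hA hA2 hB hB2 hAB
    have htA : 0 < Real.tan A := Real.tan_pos_of_pos_of_lt_pi_div_two hA hA2
    have htB : 0 < Real.tan B := Real.tan_pos_of_pos_of_lt_pi_div_two hB hB2
    have hmono : Real.tan (π/2 - A) ≤ Real.tan B := by
      rcases eq_or_lt_of_le (show π/2 - A ≤ B by linarith) with h | h
      · rw [h]
      · exact le_of_lt (Real.tan_lt_tan_of_lt_of_lt_pi_div_two (by linarith) hB2 h)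
    rw [Real.tan_pi_div_two_sub] at hmono
    have hab : 1 ≤ Real.tan A * Real.tan B := by
      calc (1:ℝ) = Real.tan A * (Real.tan A)⁻¹ := by field_simp
        _ ≤ Real.tan A * Real.tan B := by
            exact mul_le_mul_of_nonneg_left hmono htA.le
    exact key_ineq htA htB hab
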